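/- Let V = {X ∈ M₂(ℂ) : X₁₁ = 0}, where M₂(ℂ) carries the operator norm induced by the Euclidean norm, and let ⊥ denote Birkhoff–James orthogonality with complex scalars. Let L_V be the set of elements of V that are left-symmetric relative to V. Then L_V contains a nonzero element, and the only X ∈ V satisfying Z ⊥ X for every Z ∈ L_V is X = 0. -/

import Mathlib

open scoped Matrix.Norms.L2Operator

/-- Birkhoff–James orthogonality with complex scalars. -/
def BJ {E : Type*} [Norm E] [Add E] [SMul ℂ E] (u v : E) : Prop :=
  ∀ c : ℂ, ‖u‖ ≤ ‖u + c • v‖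

/-- `A` is left-symmetric relative to the subset `S`. -/
def LeftSymmRel {E : Type*} [Norm E] [Add E] [SMul ℂ E] (S : Set E) (A : E) : Prop :=
  A ∈ S ∧ ∀ B ∈ S, BJ A B → BJ B A

/-- The subspace `V = {X ∈ M₂(ℂ) : X₁₁ = 0}`. -/
def V : Set (Matrix (Fin 2) (Fin 2) ℂ) := {X | X 0 0 = 0}

open Matrix

noncomputable section LS

private lemma my_opNorm_le (A : Matrix (Fin 2) (Fin 2) ℂ) {c : ℝ} (hc : 0 ≤ c)
    (h : ∀ x : EuclideanSpace ℂ (Fin 2), ‖(EuclideanSpace.equiv (Fin 2) ℂ).symm (A *ᵥ x)‖ ≤ c * ‖x‖) :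
    ‖A‖ ≤ c := by
  rw [Matrix.l2_opNorm_def]
  exact ContinuousLinearMap.opNorm_le_bound _ hc fun x => h x

private lemma norm_mulVec_sq (A : Matrix (Fin 2) (Fin 2) ℂ) (x : EuclideanSpace ℂ (Fin 2)) :
    ‖(EuclideanSpace.equiv (Fin 2) ℂ).symm (A *ᵥ x)‖^2
      = ‖A 0 0 * x 0 + A 0 1 * x 1‖^2 + ‖A 1 0 * x 0 + A 1 1 * x 1‖^2 := by
  rw [EuclideanSpace.norm_eq, Real.sq_sqrt (by positivity)]
  simp [Fin.sum_univ_two, Matrix.mulVec, dotProduct]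

private lemma norm_x_sq (x : EuclideanSpace ℂ (Fin 2)) : ‖x‖^2 = ‖x 0‖^2 + ‖x 1‖^2 := by
  rw [EuclideanSpace.norm_eq, Real.sq_sqrt (by positivity)]
  simp [Fin.sum_univ_two]

private lemma col_le (A : Matrix (Fin 2) (Fin 2) ℂ) (j : Fin 2) :
    Real.sqrt (‖A 0 j‖^2 + ‖A 1 j‖^2) ≤ ‖A‖ := by
  have h := Matrix.l2_opNorm_mulVec A (EuclideanSpace.single j 1)
  rw [EuclideanSpace.norm_single, norm_one, mul_one] at h
  refine le_trans (le_of_eq ?_) h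
  rw [EuclideanSpace.norm_eq]
  congr 1
  fin_cases j <;>
    simp [Fin.sum_univ_two, Matrix.mulVec, dotProduct, EuclideanSpace.single_apply]

private lemma frob_le (A : Matrix (Fin 2) (Fin 2) ℂ) :
    ‖A‖ ≤ Real.sqrt (‖A 0 0‖^2 + ‖A 0 1‖^2 + ‖A 1 0‖^2 + ‖A 1 1‖^2) := by
  apply my_opNorm_le _ (Real.sqrt_nonneg _)
  intro x
  have key : ‖(EuclideanSpace.equiv (Fin 2) ℂ).symm (A *ᵥ x)‖^2
      ≤ (‖A 0 0‖^2 + ‖A 0 1‖^2 + ‖A 1 0‖^2 + ‖A 1 1‖^2) * ‖x‖^2 := by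
    rw [norm_mulVec_sq, norm_x_sq]
    have b1 : ‖A 0 0 * x 0 + A 0 1 * x 1‖ ≤ ‖A 0 0‖ * ‖x 0‖ + ‖A 0 1‖ * ‖x 1‖ :=
      (norm_add_le _ _).trans (by rw [norm_mul, norm_mul])
    have b2 : ‖A 1 0 * x 0 + A 1 1 * x 1‖ ≤ ‖A 1 0‖ * ‖x 0‖ + ‖A 1 1‖ * ‖x 1‖ :=
      (norm_add_le _ _).trans (by rw [norm_mul, norm_mul])
    nlinarith [sq_nonneg (‖A 0 0‖ * ‖x 1‖ - ‖A 0 1‖ * ‖x 0‖),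
      sq_nonneg (‖A 1 0‖ * ‖x 1‖ - ‖A 1 1‖ * ‖x 0‖),
      norm_nonneg (A 0 0 * x 0 + A 0 1 * x 1), norm_nonneg (A 1 0 * x 0 + A 1 1 * x 1),
      mul_nonneg (mul_nonneg (norm_nonneg (A 0 0)) (norm_nonneg (x 0)))
        (mul_nonneg (norm_nonneg (A 0 1)) (norm_nonneg (x 1))),
      mul_nonneg (mul_nonneg (norm_nonneg (A 1 0)) (norm_nonneg (x 0)))
        (mul_nonneg (norm_nonneg (A 1 1)) (norm_nonneg (x 1)))]
  calc ‖(EuclideanSpace.equiv (Fin 2) ℂ).symm (A *ᵥ x)‖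
      = Real.sqrt (‖(EuclideanSpace.equiv (Fin 2) ℂ).symm (A *ᵥ x)‖^2) :=
        (Real.sqrt_sq (norm_nonneg _)).symm
    _ ≤ Real.sqrt ((‖A 0 0‖^2 + ‖A 0 1‖^2 + ‖A 1 0‖^2 + ‖A 1 1‖^2) * ‖x‖^2) :=
        Real.sqrt_le_sqrt key
    _ = Real.sqrt (‖A 0 0‖^2 + ‖A 0 1‖^2 + ‖A 1 0‖^2 + ‖A 1 1‖^2) * ‖x‖ := by
        rw [Real.sqrt_mul (by positivity), Real.sqrt_sq (norm_nonneg _)]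

private lemma antidiag_le (B : Matrix (Fin 2) (Fin 2) ℂ) (h00 : B 0 0 = 0) (h11 : B 1 1 = 0) :
    ‖B‖ ≤ max ‖B 0 1‖ ‖B 1 0‖ := by
  apply my_opNorm_le _ (le_trans (norm_nonneg (B 0 1)) (le_max_left _ _))
  intro x
  have key : ‖(EuclideanSpace.equiv (Fin 2) ℂ).symm (B *ᵥ x)‖^2
      ≤ (max ‖B 0 1‖ ‖B 1 0‖)^2 * ‖x‖^2 := by
    rw [norm_mulVec_sq, norm_x_sq, h00, h11]
    simp only [zero_mul, mul_zero, zero_add, add_zero, norm_mul]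
    have m1 : ‖B 0 1‖ ≤ max ‖B 0 1‖ ‖B 1 0‖ := le_max_left _ _
    have m2 : ‖B 1 0‖ ≤ max ‖B 0 1‖ ‖B 1 0‖ := le_max_right _ _
    have p1 : ‖B 0 1‖^2 ≤ (max ‖B 0 1‖ ‖B 1 0‖)^2 := pow_le_pow_left₀ (norm_nonneg _) m1 2
    have p2 : ‖B 1 0‖^2 ≤ (max ‖B 0 1‖ ‖B 1 0‖)^2 := pow_le_pow_left₀ (norm_nonneg _) m2 2
    nlinarith [sq_nonneg ‖x 0‖, sq_nonneg ‖x 1‖, p1, p2,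
      mul_le_mul_of_nonneg_right p1 (sq_nonneg ‖x 1‖),
      mul_le_mul_of_nonneg_right p2 (sq_nonneg ‖x 0‖)]
  calc ‖(EuclideanSpace.equiv (Fin 2) ℂ).symm (B *ᵥ x)‖
      = Real.sqrt (‖(EuclideanSpace.equiv (Fin 2) ℂ).symm (B *ᵥ x)‖^2) :=
        (Real.sqrt_sq (norm_nonneg _)).symm
    _ ≤ Real.sqrt ((max ‖B 0 1‖ ‖B 1 0‖)^2 * ‖x‖^2) := Real.sqrt_le_sqrt key
    _ = max ‖B 0 1‖ ‖B 1 0‖ * ‖x‖ := by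
        rw [Real.sqrt_mul (sq_nonneg _),
          Real.sqrt_sq (le_trans (norm_nonneg (B 0 1)) (le_max_left _ _)),
          Real.sqrt_sq (norm_nonneg _)]

private lemma normE_ge (i j : Fin 2) : (1:ℝ) ≤ ‖single i j (1:ℂ)‖ := by
  have h := col_le (single i j (1:ℂ)) j
  fin_cases i <;> fin_cases j <;> simpa [Matrix.single] using h

private lemma keyA (i j : Fin 2) (X : Matrix (Fin 2) (Fin 2) ℂ)
    (h : BJ (single i j (1:ℂ)) X) : X i j = 0 := by
  by_contra hX
  have ha : 0 < ‖X i j‖^2 := pow_pos (norm_pos_iff.mpr hX) 2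
  set S : ℝ := ‖X 0 0‖^2 + ‖X 0 1‖^2 + ‖X 1 0‖^2 + ‖X 1 1‖^2 with hSdef
  have haS : ‖X i j‖^2 ≤ S := by
    have n00 := sq_nonneg ‖X 0 0‖; have n01 := sq_nonneg ‖X 0 1‖
    have n10 := sq_nonneg ‖X 1 0‖; have n11 := sq_nonneg ‖X 1 1‖
    fin_cases i <;> fin_cases j <;>
      simp only [Fin.zero_eta, Fin.mk_one, Fin.isValue] <;> linarith
  have hS : 0 < S := lt_of_lt_of_le ha haS
  set c : ℂ := -(S⁻¹ : ℝ) * (starRingEnd ℂ) (X i j) with hc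
  have h1 : (1:ℝ) ≤ ‖single i j (1:ℂ) + c • X‖ := le_trans (normE_ge i j) (h c)
  have hcn : ∀ k l : Fin 2, ‖c * X k l‖^2 = S⁻¹^2 * ‖X i j‖^2 * ‖X k l‖^2 := by
    intro k l
    rw [norm_mul, hc, norm_mul, norm_neg, Complex.norm_real, RCLike.norm_conj,
      Real.norm_eq_abs, abs_of_nonneg (by positivity)]
    ring
  have hmain : ‖(1:ℂ) + c * X i j‖^2 = (1 - S⁻¹ * ‖X i j‖^2)^2 := by
    have e1 : (1:ℂ) + c * X i j = ((1 - S⁻¹ * ‖X i j‖^2 : ℝ) : ℂ) := by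
      rw [hc, neg_mul, neg_mul, mul_assoc, mul_comm ((starRingEnd ℂ) (X i j)) (X i j),
        Complex.mul_conj, Complex.normSq_eq_norm_sq]
      push_cast
      ring
    rw [e1, Complex.norm_real, Real.norm_eq_abs, sq_abs]
  have hF : ‖single i j (1:ℂ) + c • X‖ < 1 := by
    refine lt_of_le_of_lt (frob_le _) ?_
    have target : ∀ F : ℝ, F = (1 - S⁻¹ * ‖X i j‖^2)^2 + S⁻¹^2 * ‖X i j‖^2 * (S - ‖X i j‖^2) →
        Real.sqrt F < 1 := by
      intro F hFe
      have hinv : S⁻¹ * S = 1 := inv_mul_cancel₀ (ne_of_gt hS)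
      have hFlt : F < 1 := by nlinarith [mul_pos (inv_pos.mpr hS) ha, sq_nonneg S⁻¹]
      have hF0 : 0 ≤ F := by
        have : 0 ≤ S⁻¹^2 * ‖X i j‖^2 * (S - ‖X i j‖^2) :=
          mul_nonneg (mul_nonneg (sq_nonneg _) (sq_nonneg _)) (by linarith)
        rw [hFe]; nlinarith [sq_nonneg (1 - S⁻¹ * ‖X i j‖^2)]
      calc Real.sqrt F < Real.sqrt 1 := Real.sqrt_lt_sqrt hF0 hFlt
        _ = 1 := Real.sqrt_one
    apply target
    fin_cases i <;> fin_cases j <;>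
      · simp only [Fin.zero_eta, Fin.mk_one, Fin.isValue] at hcn hmain ⊢
        simp only [Matrix.add_apply, Matrix.smul_apply, Matrix.single,
          Matrix.of_apply, smul_eq_mul, Fin.isValue, and_self, and_true, true_and,
          one_ne_zero, zero_ne_one, and_false, false_and, if_true, if_false,
          ite_true, ite_false, zero_add, add_zero]
        rw [hmain, hcn, hcn, hcn]
        ring
  linarith

private lemma ls01 : LeftSymmRel V (single 0 1 (1:ℂ)) := by
  constructor
  · show single 0 1 (1:ℂ) 0 0 = 0
    simp [Matrix.single]
  · intro B hB hBJ
    have hB00 : B 0 0 = 0 := hB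
    have hB01 : B 0 1 = 0 := keyA 0 1 B hBJ
    intro cc
    set M := B + cc • single 0 1 (1:ℂ) with hM
    have up : ‖B‖ ≤ Real.sqrt (‖B 1 0‖^2 + ‖B 1 1‖^2) := by
      have := frob_le B
      rw [hB00, hB01] at this
      simpa using this
    have down : Real.sqrt (‖B 1 0‖^2 + ‖B 1 1‖^2) ≤ ‖M‖ := by
      have h := col_le Mᴴ 1
      rw [Matrix.l2_opNorm_conjTranspose] at h
      have e0 : Mᴴ 0 1 = (starRingEnd ℂ) (B 1 0) := by
        simp [hM, Matrix.conjTranspose_apply, Matrix.single]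
      have e1 : Mᴴ 1 1 = (starRingEnd ℂ) (B 1 1) := by
        simp [hM, Matrix.conjTranspose_apply, Matrix.single]
      rwa [e0, e1, RCLike.norm_conj, RCLike.norm_conj] at h
    exact le_trans up down

private lemma ls10 : LeftSymmRel V (single 1 0 (1:ℂ)) := by
  constructor
  · show single 1 0 (1:ℂ) 0 0 = 0
    simp [Matrix.single]
  · intro B hB hBJ
    have hB00 : B 0 0 = 0 := hB
    have hB10 : B 1 0 = 0 := keyA 1 0 B hBJ
    intro cc
    set M := B + cc • single 1 0 (1:ℂ) with hM
    have up : ‖B‖ ≤ Real.sqrt (‖B 0 1‖^2 + ‖B 1 1‖^2) := by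
      have := frob_le B
      rw [hB00, hB10] at this
      simpa using this
    have down : Real.sqrt (‖B 0 1‖^2 + ‖B 1 1‖^2) ≤ ‖M‖ := by
      have h := col_le M 1
      have e0 : M 0 1 = B 0 1 := by simp [hM, Matrix.single]
      have e1 : M 1 1 = B 1 1 := by simp [hM, Matrix.single]
      rwa [e0, e1] at h
    exact le_trans up down

private lemma ls11 : LeftSymmRel V (single 1 1 (1:ℂ)) := by
  constructor
  · show single 1 1 (1:ℂ) 0 0 = 0
    simp [Matrix.single]
  · intro B hB hBJ
    have hB00 : B 0 0 = 0 := hB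
    have hB11 : B 1 1 = 0 := keyA 1 1 B hBJ
    intro cc
    set M := B + cc • single 1 1 (1:ℂ) with hM
    have up : ‖B‖ ≤ max ‖B 0 1‖ ‖B 1 0‖ := antidiag_le B hB00 hB11
    have down1 : ‖B 1 0‖ ≤ ‖M‖ := by
      have h := col_le M 0
      have e0 : M 0 0 = 0 := by simp [hM, Matrix.single, hB00]
      have e1 : M 1 0 = B 1 0 := by simp [hM, Matrix.single]
      rw [e0, e1, norm_zero] at h
      simpa [Real.sqrt_sq (norm_nonneg (B 1 0))] using h
    have down2 : ‖B 0 1‖ ≤ ‖M‖ := by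
      have h := col_le M 1
      have e0 : M 0 1 = B 0 1 := by simp [hM, Matrix.single]
      rw [e0] at h
      refine le_trans ?_ h
      nth_rewrite 1 [← Real.sqrt_sq (norm_nonneg (B 0 1))]
      exact Real.sqrt_le_sqrt (by nlinarith [sq_nonneg ‖M 1 1‖])
    exact le_trans up (max_le down2 down1)

end LS

/-- The set `L_V` of left-symmetric elements of `V = {X ∈ M₂(ℂ) : X₁₁ = 0}` contains a
nonzero element, and the only `X ∈ V` with `Z ⊥ X` for every `Z ∈ L_V` is `X = 0`. -/
theorem leftSymmetric_in_V_total :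
    (∃ Z : Matrix (Fin 2) (Fin 2) ℂ, LeftSymmRel V Z ∧ Z ≠ 0) ∧
    ∀ X ∈ V, (∀ Z : Matrix (Fin 2) (Fin 2) ℂ, LeftSymmRel V Z → BJ Z X) → X = 0 := by
  constructor
  · refine ⟨single 0 1 (1:ℂ), ls01, ?_⟩
    intro h
    have := congrFun (congrFun h 0) 1
    simp [Matrix.single] at this
  · intro X hX h
    have h01 : X 0 1 = 0 := keyA 0 1 X (h _ ls01)
    have h10 : X 1 0 = 0 := keyA 1 0 X (h _ ls10)
    have h11 : X 1 1 = 0 := keyA 1 1 X (h _ ls11)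
    have h00 : X 0 0 = 0 := hX
    ext i j
    fin_cases i <;> fin_cases j <;> simp [h00, h01, h10, h11]
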